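/- Let R be a Noetherian homogeneous ring with local base ring (R_0, m_0), and let M, N be finitely generated graded R-modules. If for some i ∈ ℕ the generalized local cohomology module H^i_{R_+}(M,N) is R_+-cofinite (i.e., Supp(H^i_{R_+}(M,N)) ⊆ V(R_+) and Ext^j_R(R/R_+, H^i_{R_+}(M,N)) is finitely generated for all j), then Γ_{m_0 R}(H^i_{R_+}(M,N)) is Artinian. -/

import Mathlib

open CategoryTheory CategoryTheory.Limits Opposite

/-- `ℕ` acts on `ℤ`-degrees by addition (used to grade modules over `ℕ`-graded rings). -/
instance : VAdd ℕ ℤ := ⟨fun n z => (n : ℤ) + z⟩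

noncomputable section

/-- The directed system `M ⧸ a^t • M`, `t : ℕ`. -/
def genLCModDiagram {R : Type} [CommRing R] (a : Ideal R) (M : Type) [AddCommGroup M]
    [Module R M] : ℕᵒᵖ ⥤ ModuleCat R where
  obj t := ModuleCat.of R (M ⧸ (a ^ (unop t) • ⊤ : Submodule R M))
  map {t t'} w := ModuleCat.ofHom (Submodule.mapQ (a ^ (unop t) • ⊤) (a ^ (unop t') • ⊤) LinearMap.id
    (Submodule.smul_mono (Ideal.pow_le_pow_right w.unop.down.down) le_rfl))
  map_id t := by
    ext x
    simp
  map_comp {t t' t''} f g := by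
    ext x
    simp

/-- Generalized local cohomology `H^i_a(M, -)`, the direct limit of `Ext^i(M/a^t M, -)`. -/
def genLocalCohomology {R : Type} [CommRing R] (a : Ideal R) (M : Type) [AddCommGroup M]
    [Module R M] (i : ℕ) : ModuleCat R ⥤ ModuleCat R :=
  colimit ((genLCModDiagram a M).op ⋙ Ext R (ModuleCat R) i)

/-- `H^i_a(M,N)` as an object of `ModuleCat R`. -/
abbrev GLC {R : Type} [CommRing R] (a : Ideal R) (M : Type) [AddCommGroup M] [Module R M]
    (i : ℕ) (N : Type) [AddCommGroup N] [Module R N] : ModuleCat R :=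
  (genLocalCohomology a M i).obj (ModuleCat.of R N)

/-- The `a`-torsion functor `Γ_a` : the submodule of elements killed by some power of `a`. -/
def torsionGamma {R : Type} [CommRing R] (a : Ideal R) (X : Type) [AddCommGroup X]
    [Module R X] : Submodule R X :=
  ⨆ n : ℕ, Submodule.torsionBySet R X ((a ^ n : Ideal R) : Set R)

/-- `M` has projective dimension at most `n`: all `Ext^i(M, -)` for `i > n` vanish. -/
def HasProjDimLE {R : Type} [CommRing R] (M : Type) [AddCommGroup M] [Module R M]
    (n : ℕ) : Prop :=
  ∀ i : ℕ, n < i → ∀ N : ModuleCat R,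
    Subsingleton (((Ext R (ModuleCat R) i).obj (op (ModuleCat.of R M))).obj N)

/-- The irrelevant ideal `R_+` of an `ℕ`-graded ring. -/
def irrIdeal {R : Type} [CommRing R] (𝒜 : ℕ → AddSubgroup R) [GradedRing 𝒜] : Ideal R :=
  (HomogeneousIdeal.irrelevant 𝒜).toIdeal

/-- The ideal `m₀R` of `R` generated by the maximal ideal of the base ring `R₀ = 𝒜 0`. -/
def mzR {R : Type} [CommRing R] (𝒜 : ℕ → AddSubgroup R) [GradedRing 𝒜]
    [IsLocalRing (𝒜 0)] : Ideal R :=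
  Ideal.span (Subtype.val '' ((IsLocalRing.maximalIdeal (𝒜 0) : Ideal (𝒜 0)) : Set (𝒜 0)))

private noncomputable def extZeroIso {R : Type} [CommRing R] (Z Y : ModuleCat R) :
    ((Ext R (ModuleCat R) 0).obj (op Z)).obj Y ≅ ModuleCat.of R (Z ⟶ Y) := by
  have e : ((linearYoneda R (ModuleCat R)).obj Y) ⋙ forget (ModuleCat R) = yoneda.obj Y :=
    Functor.congr_obj (whiskering_linearYoneda R (ModuleCat R)) Y
  haveI hG : PreservesFiniteLimits ((linearYoneda R (ModuleCat R)).obj Y) := by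
    constructor
    intro J _ _
    haveI : PreservesLimitsOfShape J
        (((linearYoneda R (ModuleCat R)).obj Y) ⋙ forget (ModuleCat R)) := by
      rw [e]; infer_instance
    haveI : ReflectsLimitsOfShape J (forget (ModuleCat R)) :=
      reflectsLimitsOfShape_of_reflectsIsomorphisms
    exact preservesLimitsOfShape_of_reflects_of_preserves _ (forget (ModuleCat R))
  haveI : PreservesFiniteColimits (((linearYoneda R (ModuleCat R)).obj Y).rightOp) :=
    preservesFiniteColimits_rightOp _
  exact ((((linearYoneda R (ModuleCat R)).obj Y).rightOp.leftDerivedZeroIsoSelf).app Z).unop.symm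


private lemma smul_one_quot {R : Type} [CommRing R] (I : Ideal R) (a : R) :
    a • (Ideal.Quotient.mk I 1) = Ideal.Quotient.mk I a := by
  rw [← Ideal.Quotient.mk_eq_mk, ← Submodule.Quotient.mk_smul,
    smul_eq_mul, mul_one, Ideal.Quotient.mk_eq_mk]

private noncomputable def homQuotEquivTorsionCat {R : Type} [CommRing R] (I : Ideal R)
    (Xc : ModuleCat R) :
    (ModuleCat.of R (R ⧸ I) ⟶ Xc) ≃ₗ[R] ↥(Submodule.torsionBySet R Xc (I : Set R)) where
  toFun f := ⟨f (Ideal.Quotient.mk I 1), by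
    rw [Submodule.mem_torsionBySet_iff]
    rintro ⟨a, ha⟩
    show a • f (Ideal.Quotient.mk I 1) = 0
    rw [← map_smul, smul_one_quot, Ideal.Quotient.eq_zero_iff_mem.mpr ha, map_zero]⟩
  map_add' f g := rfl
  map_smul' r f := rfl
  invFun b := ModuleCat.ofHom (Submodule.liftQ I (LinearMap.toSpanSingleton R Xc (b : Xc)) (by
    intro r hr
    rw [LinearMap.mem_ker, LinearMap.toSpanSingleton_apply]
    exact (Submodule.mem_torsionBySet_iff _ _).mp b.2 ⟨r, hr⟩))
  left_inv f := by
    apply ModuleCat.hom_ext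
    apply LinearMap.ext
    intro q
    obtain ⟨r, rfl⟩ := Ideal.Quotient.mk_surjective q
    show Submodule.liftQ I (LinearMap.toSpanSingleton R Xc (f (Ideal.Quotient.mk I 1))) _
        (Submodule.Quotient.mk r) = f (Ideal.Quotient.mk I r)
    rw [Submodule.liftQ_apply, LinearMap.toSpanSingleton_apply, ← map_smul, smul_one_quot]
  right_inv b := by
    apply Subtype.ext
    show Submodule.liftQ I (LinearMap.toSpanSingleton R Xc (b : Xc)) _
        (Submodule.Quotient.mk 1) = (b : Xc)
    rw [Submodule.liftQ_apply, LinearMap.toSpanSingleton_apply, one_smul]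

private lemma melkersson_principal {R : Type} [CommRing R] {M : Type} [AddCommGroup M]
    [Module R M] (x : R) (htor : ∀ y : M, ∃ n : ℕ, x ^ n • y = 0)
    (hart : IsArtinian R (Submodule.torsionBy R M x)) : IsArtinian R M := by
  haveI := hart
  rw [← monotone_stabilizes_iff_artinian]
  intro f
  set S := Submodule.torsionBy R M x with hSdef
  let N : ℕ → Submodule R M := fun i => OrderDual.ofDual (f i)
  have hN : ∀ {i i'}, i ≤ i' → N i' ≤ N i := fun {i i'} h => f.monotone h
  let A : ℕ → ℕ → Submodule R M := fun i j => ((N i).map (LinearMap.lsmul R M (x ^ j))) ⊓ S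
  have hAS : ∀ i j, A i j ≤ S := fun i j => inf_le_right
  let B : ℕ → ℕ → Submodule R ↥S := fun i j => (A i j).comap S.subtype
  have hBA : ∀ i j, (B i j).map S.subtype = A i j := by
    intro i j
    rw [Submodule.map_comap_subtype]
    exact inf_eq_right.mpr (hAS i j)
  have hAmono : ∀ {i i' j j'}, i ≤ i' → j ≤ j' → A i' j' ≤ A i j := by
    intro i i' j j' hi hj
    refine inf_le_inf ?_ le_rfl
    intro z hz
    obtain ⟨w, hw, rfl⟩ := Submodule.mem_map.mp hz
    refine Submodule.mem_map.mpr ⟨x ^ (j' - j) • w, (N i).smul_mem _ (hN hi hw), ?_⟩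
    simp only [LinearMap.lsmul_apply, smul_smul, ← pow_add]
    rw [Nat.add_sub_cancel' hj]
  have hBmono : ∀ {i i' j j'}, i ≤ i' → j ≤ j' → B i' j' ≤ B i j :=
    fun hi hj => Submodule.comap_mono (hAmono hi hj)
  obtain ⟨P, ⟨i₀, j₀, rfl⟩, hmin⟩ :=
    IsArtinian.set_has_minimal (R := R) (M := ↥S) {p | ∃ i j, p = B i j} ⟨B 0 0, 0, 0, rfl⟩
  have hstab : ∀ i j, i₀ ≤ i → j₀ ≤ j → B i j = B i₀ j₀ := by
    intro i j hi hj
    rcases (hBmono hi hj).lt_or_eq with h | h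
    · exact absurd h (hmin _ ⟨i, j, rfl⟩)
    · exact h
  have hrow : ∀ j, ∃ i₂, ∀ i, i₂ ≤ i → B i j = B i₂ j := by
    intro j
    obtain ⟨i₂, h⟩ := IsArtinian.monotone_stabilizes (R := R) (M := ↥S)
      ⟨fun i => OrderDual.toDual (B i j), fun i i' hii' => hBmono hii' le_rfl⟩
    exact ⟨i₂, fun i hi => (congrArg OrderDual.ofDual (h i hi)).symm⟩
  choose c hc using hrow
  set i₁ := max i₀ ((Finset.range j₀).sup c) with hi₁def
  have hi₀ : i₀ ≤ i₁ := le_max_left _ _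
  have hAstab : ∀ i j, i₁ ≤ i → A i j = A i₁ j := by
    intro i j hi
    rcases le_or_gt j₀ j with hj | hj
    · have e1 : B i j = B i₀ j₀ := hstab i j (hi₀.trans hi) hj
      have e2 : B i₁ j = B i₀ j₀ := hstab i₁ j hi₀ hj
      rw [← hBA i j, ← hBA i₁ j, e1, e2]
    · have hcj : c j ≤ i₁ :=
        (Finset.le_sup (Finset.mem_range.mpr hj)).trans (le_max_right _ _)
      have e1 : B i j = B (c j) j := hc j i (hcj.trans hi)
      have e2 : B i₁ j = B (c j) j := hc j i₁ hcj
      rw [← hBA i j, ← hBA i₁ j, e1, e2]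
  have key : ∀ i, i₁ ≤ i → ∀ n : ℕ, ∀ y ∈ N i₁, x ^ n • y = 0 → y ∈ N i := by
    intro i hi n
    induction n with
    | zero =>
      intro y _ h0
      rw [pow_zero, one_smul] at h0
      rw [h0]
      exact (N i).zero_mem
    | succ n ih =>
      intro y hy hxy
      have hmem : x ^ n • y ∈ A i₁ n := by
        refine Submodule.mem_inf.mpr ⟨Submodule.mem_map.mpr ⟨y, hy, rfl⟩, ?_⟩
        rw [hSdef, Submodule.mem_torsionBy_iff, smul_smul, ← pow_succ']
        exact hxy
      have hmem' : x ^ n • y ∈ A i n := (hAstab i n hi) ▸ hmem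
      obtain ⟨z, hz, hzeq⟩ := Submodule.mem_map.mp (Submodule.mem_inf.mp hmem').1
      simp only [LinearMap.lsmul_apply] at hzeq
      have h1 : x ^ n • (y - z) = 0 := by
        rw [smul_sub, hzeq, sub_self]
      have h3 : y - z ∈ N i := ih (y - z) ((N i₁).sub_mem hy (hN hi hz)) h1
      have h4 := (N i).add_mem h3 hz
      simpa using h4
  refine ⟨i₁, fun m hm => ?_⟩
  have h2 : N i₁ ≤ N m := by
    intro y hy
    obtain ⟨n, hn⟩ := htor y
    exact key m hm n y hy hn
  have h3 : N m ≤ N i₁ := hN hm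
  have h4 : N i₁ = N m := le_antisymm h2 h3
  exact congrArg OrderDual.toDual h4

private lemma melkersson_list {R : Type} [CommRing R] (l : List R) :
    ∀ {M : Type} [AddCommGroup M] [Module R M],
    (∀ y : M, ∀ z ∈ l, ∃ n : ℕ, z ^ n • y = 0) →
    IsArtinian R (Submodule.torsionBySet R M {z | z ∈ l}) → IsArtinian R M := by
  induction l with
  | nil =>
    intro M _ _ htor hart
    have htop : Submodule.torsionBySet R M {z | z ∈ ([] : List R)} = ⊤ := by
      rw [eq_top_iff]
      intro y _
      rw [Submodule.mem_torsionBySet_iff]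
      rintro ⟨a, ha⟩
      exact absurd ha List.not_mem_nil
    rw [htop] at hart
    haveI := hart
    exact isArtinian_of_linearEquiv Submodule.topEquiv
  | cons z l ih =>
    intro M _ _ htor hart
    haveI := hart
    have hartS : IsArtinian R
        ↥(Submodule.torsionBySet R ↥(Submodule.torsionBy R M z) {w | w ∈ l}) := by
      let g : ↥(Submodule.torsionBySet R ↥(Submodule.torsionBy R M z) {w | w ∈ l}) →ₗ[R]
          ↥(Submodule.torsionBySet R M {w | w ∈ z :: l}) :=
        { toFun := fun w => ⟨((w : ↥(Submodule.torsionBy R M z)) : M), by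
            rw [Submodule.mem_torsionBySet_iff]
            rintro ⟨a, ha⟩
            rcases List.mem_cons.mp ha with rfl | h
            · exact (Submodule.mem_torsionBy_iff _ _).mp w.1.2
            · exact congrArg Subtype.val ((Submodule.mem_torsionBySet_iff _ _).mp w.2 ⟨a, h⟩)⟩
          map_add' := fun _ _ => rfl
          map_smul' := fun _ _ => rfl }
      refine isArtinian_of_injective g (fun w w' h => ?_)
      apply Subtype.ext
      apply Subtype.ext
      have h2 := congrArg (Subtype.val) h
      exact h2
    have hS : IsArtinian R ↥(Submodule.torsionBy R M z) := by
      refine ih ?_ hartS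
      intro y w hw
      obtain ⟨n, hn⟩ := htor (y : M) w (List.mem_cons_of_mem _ hw)
      exact ⟨n, Subtype.ext (by simpa using hn)⟩
    exact melkersson_principal z (fun y => htor y z List.mem_cons_self) hS

private lemma isArtinian_of_isMaximal_smul {R : Type} [CommRing R] {W : Type} [AddCommGroup W]
    [Module R W] (I : Ideal R) (hI : I.IsMaximal) (hNoe : IsNoetherian R W)
    (h1 : ∀ r ∈ I, ∀ w : W, r • w = 0) : IsArtinian R W := by
  have hT : Module.IsTorsionBySet R W I := fun w a => h1 a.1 a.2 w
  letI : Module (R ⧸ I) W := hT.module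
  haveI : IsScalarTower R (R ⧸ I) W := hT.isScalarTower
  haveI : Module.Finite R W := Module.finite_def.mpr (IsNoetherian.noetherian ⊤)
  haveI : Module.Finite (R ⧸ I) W := Module.Finite.of_restrictScalars_finite R (R ⧸ I) W
  haveI := hI
  letI : Field (R ⧸ I) := Ideal.Quotient.field I
  haveI : IsArtinian (R ⧸ I) W := isArtinian_of_fg_of_artinian'
  rw [← monotone_stabilizes_iff_artinian]
  intro f
  let lift : Submodule R W → Submodule (R ⧸ I) W := fun p =>
    { carrier := (p : Set W)
      add_mem' := fun ha hb => p.add_mem ha hb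
      zero_mem' := p.zero_mem
      smul_mem' := by
        rintro c w hw
        obtain ⟨r, rfl⟩ := Ideal.Quotient.mk_surjective c
        have hc : (Ideal.Quotient.mk I r) • w = r • w := hT.mk_smul r w
        rw [hc]
        exact p.smul_mem r hw }
  have hmono : ∀ {p q : Submodule R W}, p ≤ q → lift p ≤ lift q := fun h w hw => h hw
  let g : ℕ →o (Submodule (R ⧸ I) W)ᵒᵈ :=
    ⟨fun n => OrderDual.toDual (lift (OrderDual.ofDual (f n))),
     fun n m hnm => hmono (f.monotone hnm)⟩
  obtain ⟨n, hn⟩ := IsArtinian.monotone_stabilizes g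
  refine ⟨n, fun m hm => ?_⟩
  have h2 := hn m hm
  have h3 : ((OrderDual.ofDual (f n) : Submodule R W) : Set W)
      = ((OrderDual.ofDual (f m) : Submodule R W) : Set W) := by
    have h4 := congrArg (fun q => ((OrderDual.ofDual q : Submodule (R ⧸ I) W) : Set W)) h2
    exact h4
  have h5 : (OrderDual.ofDual (f n) : Submodule R W) = OrderDual.ofDual (f m) :=
    SetLike.coe_injective h3
  exact congrArg OrderDual.toDual h5

private lemma torsionGamma_spec {R : Type} [CommRing R] {J : Ideal R} {X : Type} [AddCommGroup X]
    [Module R X] {y : X} (hy : y ∈ torsionGamma J X) :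
    ∃ n : ℕ, ∀ r ∈ (J ^ n : Ideal R), r • y = 0 := by
  have hdir : Directed (· ≤ ·)
      (fun n : ℕ => Submodule.torsionBySet R X ((J ^ n : Ideal R) : Set R)) := by
    apply Monotone.directed_le
    intro n m hnm
    exact Submodule.torsionBySet_le_torsionBySet_of_subset (Ideal.pow_le_pow_right hnm)
  rw [torsionGamma, Submodule.mem_iSup_of_directed _ hdir] at hy
  obtain ⟨n, hn⟩ := hy
  exact ⟨n, fun r hr => (Submodule.mem_torsionBySet_iff _ _).mp hn ⟨r, hr⟩⟩

private lemma pointwise_torsion_of_supp {R : Type} [CommRing R] [IsNoetherianRing R]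
    {X : Type} [AddCommGroup X] [Module R X] {J : Ideal R}
    (hsupp : ∀ p ∈ Module.support R X, J ≤ p.asIdeal) (y : X) :
    ∃ n : ℕ, ∀ r ∈ (J ^ n : Ideal R), r • y = 0 := by
  set A : Ideal R := LinearMap.ker (LinearMap.toSpanSingleton R X y) with hA
  have hrad : J ≤ A.radical := by
    intro x hx
    rw [Ideal.radical_eq_sInf]
    rw [Submodule.mem_sInf]
    rintro p ⟨hAp, hp⟩
    by_cases hmem : (⟨p, hp⟩ : PrimeSpectrum R) ∈ Module.support R X
    · exact hsupp _ hmem hx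
    · rw [Module.notMem_support_iff'] at hmem
      obtain ⟨r, hr, hry⟩ := hmem y
      exfalso
      apply hr
      apply hAp
      rw [hA, LinearMap.mem_ker, LinearMap.toSpanSingleton_apply]
      exact hry
  obtain ⟨n, hn⟩ := Ideal.exists_pow_le_of_le_radical_of_fg_radical hrad
    (IsNoetherian.noetherian _)
  refine ⟨n, fun r hr => ?_⟩
  have := hn hr
  rw [hA, LinearMap.mem_ker, LinearMap.toSpanSingleton_apply] at this
  exact this

private lemma msup_isMaximal {R : Type} [CommRing R] (𝒜 : ℕ → AddSubgroup R) [GradedRing 𝒜]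
    [IsLocalRing (𝒜 0)] : (mzR 𝒜 ⊔ irrIdeal 𝒜).IsMaximal := by
  classical
  set ψ : R →+* IsLocalRing.ResidueField (↥(𝒜 0)) :=
    (IsLocalRing.residue (↥(𝒜 0))).comp (GradedRing.projZeroRingHom' 𝒜) with hψ
  have hsurj : Function.Surjective ψ :=
    (IsLocalRing.residue_surjective).comp (GradedRing.projZeroRingHom'_surjective 𝒜)
  have hker : mzR 𝒜 ⊔ irrIdeal 𝒜 = RingHom.ker ψ := by
    apply le_antisymm
    · refine sup_le ?_ ?_
      · rw [mzR, Ideal.span_le]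
        rintro _ ⟨a, ha, rfl⟩
        rw [SetLike.mem_coe, RingHom.mem_ker, hψ, RingHom.comp_apply,
          GradedRing.projZeroRingHom'_apply_coe]
        exact Ideal.Quotient.eq_zero_iff_mem.mpr ha
      · intro r hr
        rw [irrIdeal, HomogeneousIdeal.toIdeal_irrelevant, RingHom.mem_ker] at hr
        rw [RingHom.mem_ker, hψ, RingHom.comp_apply]
        have h0 : GradedRing.projZeroRingHom' 𝒜 r = 0 := by
          apply Subtype.ext
          rw [GradedRing.coe_projZeroRingHom'_apply, hr]
          rfl
        rw [h0, map_zero]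
    · intro r hr
      rw [RingHom.mem_ker, hψ, RingHom.comp_apply] at hr
      set a := GradedRing.projZeroRingHom' 𝒜 r with ha
      have haM : a ∈ IsLocalRing.maximalIdeal (↥(𝒜 0)) :=
        Ideal.Quotient.eq_zero_iff_mem.mp hr
      have h1 : (a : R) ∈ mzR 𝒜 := Ideal.subset_span ⟨a, haM, rfl⟩
      have h2 : r - (a : R) ∈ irrIdeal 𝒜 := by
        rw [irrIdeal, HomogeneousIdeal.toIdeal_irrelevant, RingHom.mem_ker, map_sub]
        have h3 : GradedRing.projZeroRingHom 𝒜 (a : R) = (a : R) := by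
          rw [GradedRing.projZeroRingHom_apply]
          exact DirectSum.decompose_of_mem_same 𝒜 a.2
        rw [h3, ← GradedRing.coe_projZeroRingHom'_apply, ← ha, sub_self]
      have h4 := Submodule.add_mem_sup h1 h2
      simpa using h4
  rw [hker]
  exact RingHom.ker_isMaximal_of_surjective ψ hsurj

private lemma main_general {R : Type} [CommRing R] [IsNoetherianRing R] {X : Type}
    [AddCommGroup X] [Module R X] (J1 J2 : Ideal R) (hmax : (J1 ⊔ J2).IsMaximal)
    (htor2 : ∀ y : X, ∃ n : ℕ, ∀ r ∈ (J2 ^ n : Ideal R), r • y = 0)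
    (hnoe : IsNoetherian R ↥(Submodule.torsionBySet R X (J2 : Set R))) :
    IsArtinian R ↥(torsionGamma J1 X) := by
  classical
  obtain ⟨s, hs⟩ := IsNoetherian.noetherian (J1 ⊔ J2)
  have hWle : Submodule.torsionBySet R X ((J1 ⊔ J2 : Ideal R) : Set R)
      ≤ Submodule.torsionBySet R X (J2 : Set R) :=
    Submodule.torsionBySet_le_torsionBySet_of_subset
      (fun r hr => (le_sup_right : J2 ≤ J1 ⊔ J2) hr)
  haveI hWnoe : IsNoetherian R ↥(Submodule.torsionBySet R X ((J1 ⊔ J2 : Ideal R) : Set R)) :=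
    isNoetherian_of_injective (Submodule.inclusion hWle) (Submodule.inclusion_injective hWle)
  haveI hWart : IsArtinian R ↥(Submodule.torsionBySet R X ((J1 ⊔ J2 : Ideal R) : Set R)) := by
    refine isArtinian_of_isMaximal_smul (J1 ⊔ J2) hmax hWnoe ?_
    intro r hr w
    apply Subtype.ext
    show r • (w : X) = 0
    exact (Submodule.mem_torsionBySet_iff _ _).mp w.2 ⟨r, hr⟩
  apply melkersson_list s.toList
  · rintro ⟨v, hv⟩ z hz
    have hzm : z ∈ J1 ⊔ J2 := by
      rw [← hs]
      exact Submodule.subset_span (by simpa using hz)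
    obtain ⟨a, haJ, b, hbJ, rfl⟩ := Submodule.mem_sup.mp hzm
    obtain ⟨n₁, hn₁⟩ := torsionGamma_spec hv
    obtain ⟨n₂, hn₂⟩ := htor2 v
    refine ⟨n₁ + n₂, ?_⟩
    apply Subtype.ext
    show (a + b) ^ (n₁ + n₂) • v = 0
    rw [add_pow, Finset.sum_smul]
    apply Finset.sum_eq_zero
    intro k hk
    rcases le_or_gt n₁ k with h | h
    · have hfac : a ^ k * b ^ (n₁ + n₂ - k) * ((n₁ + n₂).choose k : R) =
          (a ^ (k - n₁) * b ^ (n₁ + n₂ - k) * ((n₁ + n₂).choose k : R)) * a ^ n₁ := by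
        rw [← pow_sub_mul_pow a h]; ring
      rw [hfac, mul_smul, hn₁ (a ^ n₁) (Ideal.pow_mem_pow haJ n₁), smul_zero]
    · have h2 : n₂ ≤ n₁ + n₂ - k := by omega
      have hfac : a ^ k * b ^ (n₁ + n₂ - k) * ((n₁ + n₂).choose k : R) =
          (a ^ k * b ^ (n₁ + n₂ - k - n₂) * ((n₁ + n₂).choose k : R)) * b ^ n₂ := by
        rw [← pow_sub_mul_pow b h2]; ring
      rw [hfac, mul_smul, hn₂ (b ^ n₂) (Ideal.pow_mem_pow hbJ n₂), smul_zero]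
  · let g : ↥(Submodule.torsionBySet R ↥(torsionGamma J1 X) {z | z ∈ s.toList}) →ₗ[R]
        ↥(Submodule.torsionBySet R X ((J1 ⊔ J2 : Ideal R) : Set R)) :=
      { toFun := fun w => ⟨((w : ↥(torsionGamma J1 X)) : X), by
          rw [Submodule.mem_torsionBySet_iff]
          rintro ⟨r, hr⟩
          have hw := (Submodule.mem_torsionBySet_iff _ _).mp w.2
          have hann : Ideal.span (↑s : Set R)
              ≤ LinearMap.ker (LinearMap.toSpanSingleton R X ((w : ↥(torsionGamma J1 X)) : X)) := by
            rw [Ideal.span_le]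
            intro z hz
            rw [SetLike.mem_coe, LinearMap.mem_ker, LinearMap.toSpanSingleton_apply]
            have h0 := hw ⟨z, by simpa using hz⟩
            exact congrArg Subtype.val h0
          have h5 : r ∈ Ideal.span (↑s : Set R) := by rw [Ideal.span, hs]; exact hr
          have h6 := hann h5
          rw [LinearMap.mem_ker, LinearMap.toSpanSingleton_apply] at h6
          exact h6⟩
        map_add' := fun _ _ => rfl
        map_smul' := fun _ _ => rfl }
    refine isArtinian_of_injective g (fun w w' h => ?_)
    apply Subtype.ext
    apply Subtype.ext
    have h2 := congrArg (Subtype.val) h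
    exact h2

/-- If `H^i_{R_+}(M,N)` is `R_+`-cofinite, then `Γ_{m₀R}(H^i_{R_+}(M,N))` is Artinian. -/
theorem stmt6 {R : Type} [CommRing R] [IsNoetherianRing R]
    (𝒜 : ℕ → AddSubgroup R) [GradedRing 𝒜] [IsLocalRing (𝒜 0)]
    (hhom : Subring.closure ((𝒜 0 : Set R) ∪ (𝒜 1 : Set R)) = ⊤)
    (M N : Type) [AddCommGroup M] [Module R M] [Module.Finite R M]
    [AddCommGroup N] [Module R N] [Module.Finite R N]
    (ℳ : ℤ → AddSubgroup M) [SetLike.GradedSMul 𝒜 ℳ] [DirectSum.Decomposition ℳ]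
    (𝒩 : ℤ → AddSubgroup N) [SetLike.GradedSMul 𝒜 𝒩] [DirectSum.Decomposition 𝒩]
    (i : ℕ)
    (hsupp : ∀ p ∈ Module.support R (GLC (irrIdeal 𝒜) M i N), irrIdeal 𝒜 ≤ p.asIdeal)
    (hext : ∀ j : ℕ, Module.Finite R
      (((Ext R (ModuleCat R) j).obj (op (ModuleCat.of R (R ⧸ irrIdeal 𝒜)))).obj
        (GLC (irrIdeal 𝒜) M i N))) :
    IsArtinian R (torsionGamma (mzR 𝒜) (GLC (irrIdeal 𝒜) M i N)) := by
  classical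
  have hmax : (mzR 𝒜 ⊔ irrIdeal 𝒜).IsMaximal := msup_isMaximal 𝒜
  have e1 := (extZeroIso (ModuleCat.of R (R ⧸ irrIdeal 𝒜))
    (GLC (irrIdeal 𝒜) M i N)).toLinearEquiv
  haveI h0 := hext 0
  haveI hfinTor : Module.Finite R
      ↥(Submodule.torsionBySet R (GLC (irrIdeal 𝒜) M i N) ((irrIdeal 𝒜 : Ideal R) : Set R)) :=
    Module.Finite.equiv (e1.trans (homQuotEquivTorsionCat (irrIdeal 𝒜) (GLC (irrIdeal 𝒜) M i N)))
  have hnoe : IsNoetherian R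
      ↥(Submodule.torsionBySet R (GLC (irrIdeal 𝒜) M i N) ((irrIdeal 𝒜 : Ideal R) : Set R)) :=
    isNoetherian_of_isNoetherianRing_of_finite R _
  exact main_general (mzR 𝒜) (irrIdeal 𝒜) hmax
    (fun y => pointwise_torsion_of_supp hsupp y) hnoe
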